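/- For positive semi-definite n×n matrices A₁, A₂, A₃ with A₃ invertible, equality D(A₁,A₃[n−1])·D(A₂,A₃[n−1]) = ((n−1)/n)·D(A₁,A₂,A₃[n−2])·det(A₃) holds if and only if A₁A₃⁻¹A₂ = 0. -/

import Mathlib

open Finset Equiv Matrix

lemma sumPerm1 {m : ℕ} (g : Fin (m + 1) → ℝ) :
    ∑ σ : Equiv.Perm (Fin (m + 1)), g (σ 0) = (Nat.factorial m : ℝ) * ∑ p, g p := by
  rw [← Equiv.sum_comp (Equiv.Perm.decomposeFin (n := m)).symm (fun σ => g (σ 0))]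
  rw [Fintype.sum_prod_type]
  simp only [Equiv.Perm.decomposeFin_symm_apply_zero, Finset.sum_const, Fintype.card_perm]
  simp [Finset.mul_sum, Fintype.card_perm, Fintype.card_fin, mul_comm, nsmul_eq_mul]

lemma sumPerm2 {m : ℕ} (g : Fin (m + 2) → Fin (m + 2) → ℝ) :
    ∑ σ : Equiv.Perm (Fin (m + 2)), g (σ 0) (σ 1) =
      (Nat.factorial m : ℝ) * ∑ p, ∑ q ∈ Finset.univ.erase p, g p q := by
  rw [← Equiv.sum_comp (Equiv.Perm.decomposeFin (n := m + 1)).symm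
      (fun σ => g (σ 0) (σ 1))]
  rw [Fintype.sum_prod_type]
  simp only [Equiv.Perm.decomposeFin_symm_apply_zero, Equiv.Perm.decomposeFin_symm_apply_one]
  have h1 : ∀ p : Fin (m + 2), ∑ τ : Equiv.Perm (Fin (m + 1)),
      g p (Equiv.swap 0 p ((τ 0).succ)) =
      (Nat.factorial m : ℝ) * ∑ q : Fin (m + 1), g p (Equiv.swap 0 p q.succ) := by
    intro p
    exact sumPerm1 (fun q => g p (Equiv.swap 0 p q.succ))
  simp only [h1]
  rw [← Finset.mul_sum]
  congr 1
  refine Finset.sum_congr rfl (fun p _ => ?_)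
  refine Finset.sum_bij (fun q _ => Equiv.swap 0 p q.succ) ?_ ?_ ?_ ?_
  · intro q _
    simp only [Finset.mem_erase, Finset.mem_univ, and_true]
    intro h
    have h2 : q.succ = 0 := by
      have := congrArg (Equiv.swap 0 p) h
      rwa [Equiv.swap_apply_self, Equiv.swap_apply_right] at this
    exact Fin.succ_ne_zero q h2
  · intro a _ b _ h
    exact Fin.succ_injective _ ((Equiv.swap 0 p).injective h)
  · intro j hj
    simp only [Finset.mem_erase, Finset.mem_univ, and_true] at hj
    have hr : Equiv.swap 0 p j ≠ 0 := by
      intro h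
      apply hj
      have := (Equiv.swap 0 p).injective (a₁ := j) (a₂ := p)
      apply this
      rw [h, Equiv.swap_apply_right]
    obtain ⟨q, hq⟩ := Fin.exists_succ_eq_of_ne_zero hr
    refine ⟨q, Finset.mem_univ q, ?_⟩
    show Equiv.swap 0 p q.succ = j
    rw [hq, Equiv.swap_apply_self]
  · intros; rfl

lemma prod_double {m : ℕ} {j₀ j₁ : Fin m} (h : j₀ ≠ j₁) (x y : ℝ) :
    (∏ j : Fin m, if j = j₁ then y else if j = j₀ then x else 1) = x * y := by
  rw [← Finset.prod_erase_mul Finset.univ _ (Finset.mem_univ j₁)]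
  rw [if_pos rfl]
  have : ∀ j ∈ Finset.univ.erase j₁,
      (if j = j₁ then y else if j = j₀ then x else 1) = if j = j₀ then x else 1 := by
    intro j hj
    rw [if_neg (Finset.mem_erase.1 hj).1]
  rw [Finset.prod_congr rfl this, Finset.prod_ite_eq' (Finset.univ.erase j₁) j₀ (fun _ => x),
    if_pos (Finset.mem_erase.2 ⟨h, Finset.mem_univ _⟩)]

-- det of identity with two columns replaced
lemma det_one_updateTwo {m : ℕ} (j₀ j₁ : Fin m) (h : j₀ ≠ j₁) (a b : Fin m → ℝ) :
    (((1 : Matrix (Fin m) (Fin m) ℝ).updateCol j₀ a).updateCol j₁ b).det =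
      a j₀ * b j₁ - a j₁ * b j₀ := by
  classical
  set M := ((1 : Matrix (Fin m) (Fin m) ℝ).updateCol j₀ a).updateCol j₁ b with hM
  have hMapp : ∀ i j, M i j = if j = j₁ then b i else if j = j₀ then a i else
      (1 : Matrix (Fin m) (Fin m) ℝ) i j := by
    intro i j
    simp [hM, Matrix.updateCol_apply]
  have hne : (1 : Equiv.Perm (Fin m)) ≠ Equiv.swap j₀ j₁ := by
    intro he
    apply h
    have := congrFun (congrArg (fun σ : Equiv.Perm (Fin m) => (σ : Fin m → Fin m)) he) j₀
    simpa [Equiv.swap_apply_left] using this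
  rw [Matrix.det_apply]
  rw [Finset.sum_eq_add_of_mem (1 : Equiv.Perm (Fin m)) (Equiv.swap j₀ j₁)
    (Finset.mem_univ _) (Finset.mem_univ _) hne ?_]
  · have e1 : ∀ j, M ((1 : Equiv.Perm (Fin m)) j) j =
        if j = j₁ then b j₁ else if j = j₀ then a j₀ else 1 := by
      intro j
      rw [hMapp]
      by_cases hj1 : j = j₁
      · simp [hj1]
      by_cases hj0 : j = j₀ <;> simp [hj1, hj0, h, Matrix.one_apply]
    have e2 : ∀ j, M ((Equiv.swap j₀ j₁) j) j =
        if j = j₁ then b j₀ else if j = j₀ then a j₁ else 1 := by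
      intro j
      rw [hMapp]
      by_cases hj1 : j = j₁
      · simp [hj1, Equiv.swap_apply_right]
      by_cases hj0 : j = j₀
      · simp [hj1, hj0, h, Equiv.swap_apply_left]
      · simp [hj1, hj0, Matrix.one_apply, Equiv.swap_apply_of_ne_of_ne hj0 hj1]
    rw [Finset.prod_congr rfl (fun j _ => e1 j), Finset.prod_congr rfl (fun j _ => e2 j)]
    rw [prod_double h, prod_double h]
    rw [Equiv.Perm.sign_one, Equiv.Perm.sign_swap h]
    simp only [one_smul, Units.neg_smul, one_smul]
    ring
  · intro σ _ hσ
    obtain ⟨hσ1, hσs⟩ := hσ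
    have : ∃ i, i ≠ j₀ ∧ i ≠ j₁ ∧ σ i ≠ i := by
      by_contra hc
      push_neg at hc
      have hj0 : σ j₀ = j₀ ∨ σ j₀ = j₁ := by
        by_contra hd
        push_neg at hd
        have := hc (σ j₀) hd.1 hd.2
        exact hd.1 (σ.injective this)
      have hj1 : σ j₁ = j₀ ∨ σ j₁ = j₁ := by
        by_contra hd
        push_neg at hd
        have := hc (σ j₁) hd.1 hd.2
        exact hd.2 (σ.injective this)
      rcases hj0 with h0 | h0
      · apply hσ1
        ext i
        by_cases hi0 : i = j₀
        · simp [hi0, h0]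
        by_cases hi1 : i = j₁
        · subst hi1
          rcases hj1 with h1 | h1
          · exact absurd (σ.injective (h0.trans h1.symm)) h
          · simp [h1]
        · simp [hc i hi0 hi1]
      · apply hσs
        ext i
        by_cases hi0 : i = j₀
        · simp [hi0, h0, Equiv.swap_apply_left]
        by_cases hi1 : i = j₁
        · subst hi1
          rcases hj1 with h1 | h1
          · simp [h1, Equiv.swap_apply_right]
          · exact absurd (σ.injective (h0.trans h1.symm)) h
        · simp [hc i hi0 hi1, Equiv.swap_apply_of_ne_of_ne hi0 hi1]
    obtain ⟨i, hi0, hi1, hmoved⟩ := this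
    have hz : M (σ i) i = 0 := by
      rw [hMapp]
      simp [hi0, hi1, Matrix.one_apply, hmoved]
    have hpz : ∏ x : Fin m, M (σ x) x = 0 := Finset.prod_eq_zero (Finset.mem_univ i) hz
    rw [hpz]
    simp

-- Jacobi's two-column identity
lemma jacobi_two_col {m : ℕ} {A : Matrix (Fin m) (Fin m) ℝ} (hA : IsUnit A.det)
    {j₀ j₁ : Fin m} (h : j₀ ≠ j₁) (u v : Fin m → ℝ) :
    A.det * ((A.updateCol j₀ u).updateCol j₁ v).det =
      Matrix.cramer A u j₀ * Matrix.cramer A v j₁ -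
        Matrix.cramer A v j₀ * Matrix.cramer A u j₁ := by
  classical
  have hAd : A.det ≠ 0 := IsUnit.ne_zero hA
  have hinv : A⁻¹ * A = 1 := Matrix.nonsing_inv_mul A hA
  set N := (A.updateCol j₀ u).updateCol j₁ v with hN
  have key : A⁻¹ * N =
      ((1 : Matrix (Fin m) (Fin m) ℝ).updateCol j₀ (A⁻¹ *ᵥ u)).updateCol j₁ (A⁻¹ *ᵥ v) := by
    ext i j
    by_cases hj1 : j = j₁
    · simp [hN, hj1, Matrix.mul_apply, Matrix.updateCol_apply, Matrix.mulVec, dotProduct]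
    by_cases hj0 : j = j₀
    · simp [hN, hj1, hj0, h, Matrix.mul_apply, Matrix.updateCol_apply, Matrix.mulVec,
        dotProduct]
    · have h2 : (A⁻¹ * N) i j = (A⁻¹ * A) i j := by
        simp only [Matrix.mul_apply]
        refine Finset.sum_congr rfl (fun l _ => ?_)
        simp [hN, Matrix.updateCol_apply, hj1, hj0]
      rw [h2, hinv]
      simp [Matrix.updateCol_apply, hj1, hj0]
  have hdetinv : A⁻¹.det = (A.det)⁻¹ := by
    rw [Matrix.det_nonsing_inv]
    simp [Ring.inverse_eq_inv']
  have hdet : (A.det)⁻¹ * N.det =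
      (A⁻¹ *ᵥ u) j₀ * (A⁻¹ *ᵥ v) j₁ - (A⁻¹ *ᵥ u) j₁ * (A⁻¹ *ᵥ v) j₀ := by
    rw [← hdetinv, ← Matrix.det_mul, key, det_one_updateTwo j₀ j₁ h]
  have hNdet : N.det = A.det *
      ((A⁻¹ *ᵥ u) j₀ * (A⁻¹ *ᵥ v) j₁ - (A⁻¹ *ᵥ u) j₁ * (A⁻¹ *ᵥ v) j₀) := by
    have h3 : A.det * ((A.det)⁻¹ * N.det) = A.det *
        ((A⁻¹ *ᵥ u) j₀ * (A⁻¹ *ᵥ v) j₁ - (A⁻¹ *ᵥ u) j₁ * (A⁻¹ *ᵥ v) j₀) := by rw [hdet]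
    rwa [← mul_assoc, mul_inv_cancel₀ hAd, one_mul] at h3
  have hcram : ∀ b : Fin m → ℝ, Matrix.cramer A b = A.det • (A⁻¹ *ᵥ b) := by
    intro b
    have h4 : A.det • (A⁻¹ *ᵥ b) = A.adjugate *ᵥ b := by
      rw [Matrix.inv_def, Matrix.smul_mulVec, smul_smul,
        Ring.inverse_eq_inv', mul_inv_cancel₀ hAd, one_smul]
    rw [Matrix.cramer_eq_adjugate_mulVec, ← h4]
  rw [hcram, hcram, hNdet]
  simp only [Pi.smul_apply, smul_eq_mul]
  ring

/-- The mixed discriminant. -/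
noncomputable def mixedDisc {n : ℕ} (A : Fin n → Matrix (Fin n) (Fin n) ℝ) : ℝ :=
  (1 / (Nat.factorial n : ℝ)) *
    ∑ σ : Equiv.Perm (Fin n), Matrix.det (Matrix.of fun i j => A (σ j) i j)

lemma mixedDisc_one {n : ℕ} (X A : Matrix (Fin (n + 2)) (Fin (n + 2)) ℝ) :
    mixedDisc (fun k => if k = 0 then X else A) = (A.adjugate * X).trace / (n + 2) := by
  classical
  unfold mixedDisc
  have hper : ∀ σ : Equiv.Perm (Fin (n + 2)),
      (Matrix.of fun i j => (if σ j = 0 then X else A) i j) =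
        A.updateCol (σ⁻¹ 0) (fun i => X i (σ⁻¹ 0)) := by
    intro σ
    ext i j
    rw [Matrix.updateCol_apply]
    by_cases hj : j = σ⁻¹ 0
    · have : σ j = 0 := by rw [hj]; simp
      simp [hj, this]
    · have : σ j ≠ 0 := by
        intro hc
        exact hj (by rw [← hc]; simp)
      simp only [Matrix.of_apply, if_neg hj, if_neg this]
  simp only [hper]
  have hswap : ∑ σ : Equiv.Perm (Fin (n + 2)),
      (A.updateCol (σ⁻¹ 0) (fun i => X i (σ⁻¹ 0))).det =
      ∑ σ : Equiv.Perm (Fin (n + 2)),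
      (A.updateCol (σ 0) (fun i => X i (σ 0))).det := by
    exact Equiv.sum_comp (Equiv.inv (Equiv.Perm (Fin (n + 2))))
      (fun σ => (A.updateCol (σ 0) (fun i => X i (σ 0))).det)
  rw [hswap, sumPerm1 (m := n + 1) (fun p => (A.updateCol p (fun i => X i p)).det)]
  have htr : ∑ p : Fin (n + 2), (A.updateCol p (fun i => X i p)).det =
      (A.adjugate * X).trace := by
    have h5 : ∀ p : Fin (n + 2), (A.updateCol p (fun i => X i p)).det =
        (A.adjugate * X) p p := by
      intro p
      rw [← Matrix.cramer_apply, Matrix.cramer_eq_adjugate_mulVec]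
      simp [Matrix.mul_apply, Matrix.mulVec, dotProduct]
    simp only [h5]
    rfl
  rw [htr]
  have hfac : (Nat.factorial (n + 2) : ℝ) = (n + 2) * Nat.factorial (n + 1) := by
    rw [Nat.factorial_succ]
    push_cast
    ring
  have h1 : (Nat.factorial (n + 1) : ℝ) ≠ 0 := Nat.cast_ne_zero.2 (Nat.factorial_ne_zero _)
  have h2 : (n + 2 : ℝ) ≠ 0 := by positivity
  field_simp [hfac]
  rw [hfac]; ring

lemma mixedDisc_two {n : ℕ} (X Y A : Matrix (Fin (n + 2)) (Fin (n + 2)) ℝ)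
    (hA : IsUnit A.det) :
    A.det * mixedDisc (fun k => if k = 0 then X else if k = 1 then Y else A) =
      ((A.adjugate * X).trace * (A.adjugate * Y).trace -
        (A.adjugate * X * (A.adjugate * Y)).trace) / ((n + 2) * (n + 1)) := by
  classical
  set T : Fin (n + 2) → Fin (n + 2) → ℝ := fun p q =>
    ((A.updateCol p (fun i => X i p)).updateCol q (fun i => Y i q)).det with hT
  unfold mixedDisc
  have h01 : (0 : Fin (n + 2)) ≠ 1 := Fin.zero_ne_one
  have hper : ∀ σ : Equiv.Perm (Fin (n + 2)),
      (Matrix.of fun i j => (if σ j = 0 then X else if σ j = 1 then Y else A) i j) =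
        (A.updateCol (σ⁻¹ 0) (fun i => X i (σ⁻¹ 0))).updateCol (σ⁻¹ 1)
          (fun i => Y i (σ⁻¹ 1)) := by
    intro σ
    ext i j
    rw [Matrix.updateCol_apply, Matrix.updateCol_apply]
    by_cases hj1 : j = σ⁻¹ 1
    · have e1 : σ j = 1 := by rw [hj1]; simp
      have e0 : σ j ≠ 0 := by rw [e1]; exact Ne.symm h01
      simp [hj1, e1, e0]
    by_cases hj0 : j = σ⁻¹ 0
    · have e0 : σ j = 0 := by rw [hj0]; simp
      simp [hj1, hj0, e0]
    · have e0 : σ j ≠ 0 := fun hc => hj0 (by rw [← hc]; simp)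
      have e1 : σ j ≠ 1 := fun hc => hj1 (by rw [← hc]; simp)
      simp only [Matrix.of_apply, if_neg hj1, if_neg hj0, if_neg e0, if_neg e1]
  simp only [hper]
  have hswap : ∑ σ : Equiv.Perm (Fin (n + 2)), T (σ⁻¹ 0) (σ⁻¹ 1) =
      ∑ σ : Equiv.Perm (Fin (n + 2)), T (σ 0) (σ 1) :=
    Equiv.sum_comp (Equiv.inv (Equiv.Perm (Fin (n + 2)))) (fun σ => T (σ 0) (σ 1))
  rw [show (∑ σ : Equiv.Perm (Fin (n + 2)),
      ((A.updateCol (σ⁻¹ 0) fun i => X i (σ⁻¹ 0)).updateCol (σ⁻¹ 1)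
        fun i => Y i (σ⁻¹ 1)).det) = ∑ σ : Equiv.Perm (Fin (n + 2)), T (σ⁻¹ 0) (σ⁻¹ 1) from rfl]
  rw [hswap, sumPerm2 (m := n) (fun p q => T p q)]
  -- now evaluate A.det * (n! * ∑ p, ∑ q ≠ p, T p q)
  have hc : ∀ (Z : Matrix (Fin (n + 2)) (Fin (n + 2)) ℝ) (p j : Fin (n + 2)),
      Matrix.cramer A (fun i => Z i p) j = (A.adjugate * Z) j p := by
    intro Z p j
    rw [Matrix.cramer_eq_adjugate_mulVec]
    simp [Matrix.mul_apply, Matrix.mulVec, dotProduct]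
  have hG : ∀ p : Fin (n + 2), ∀ q ∈ Finset.univ.erase p, A.det * T p q =
      (A.adjugate * X) p p * (A.adjugate * Y) q q -
        (A.adjugate * Y) p q * (A.adjugate * X) q p := by
    intro p q hq
    have hpq : p ≠ q := Ne.symm (Finset.mem_erase.1 hq).1
    rw [hT]
    rw [jacobi_two_col hA hpq]
    rw [hc X p p, hc Y q q, hc Y q p, hc X p q]
  have hsum : A.det * ∑ p, ∑ q ∈ Finset.univ.erase p, T p q =
      (A.adjugate * X).trace * (A.adjugate * Y).trace -
        (A.adjugate * X * (A.adjugate * Y)).trace := by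
    rw [Finset.mul_sum]
    have e1 : ∀ p ∈ Finset.univ, A.det * ∑ q ∈ Finset.univ.erase p, T p q =
        ∑ q ∈ Finset.univ.erase p, ((A.adjugate * X) p p * (A.adjugate * Y) q q -
          (A.adjugate * Y) p q * (A.adjugate * X) q p) := by
      intro p _
      rw [Finset.mul_sum]
      exact Finset.sum_congr rfl (hG p)
    rw [Finset.sum_congr rfl e1]
    have e2 : ∀ p ∈ Finset.univ, ∑ q ∈ Finset.univ.erase p,
        ((A.adjugate * X) p p * (A.adjugate * Y) q q -
          (A.adjugate * Y) p q * (A.adjugate * X) q p) =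
        ∑ q : Fin (n + 2), ((A.adjugate * X) p p * (A.adjugate * Y) q q -
          (A.adjugate * Y) p q * (A.adjugate * X) q p) := by
      intro p _
      rw [Finset.sum_erase_eq_sub (Finset.mem_univ p)]
      ring
    rw [Finset.sum_congr rfl e2]
    simp only [Finset.sum_sub_distrib]
    rw [← Finset.sum_mul_sum]
    congr 1
    rw [Finset.sum_comm]
    simp [Matrix.trace, Matrix.diag, Matrix.mul_apply, mul_comm]
  have h1 : (Nat.factorial (n + 2) : ℝ) ≠ 0 := Nat.cast_ne_zero.2 (Nat.factorial_ne_zero _)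
  have hfac : (Nat.factorial (n + 2) : ℝ) =
      (n + 2) * ((n + 1) * Nat.factorial n) := by
    rw [Nat.factorial_succ, Nat.factorial_succ]
    push_cast
    ring
  have hn : (Nat.factorial n : ℝ) ≠ 0 := Nat.cast_ne_zero.2 (Nat.factorial_ne_zero _)
  have h2 : ((n : ℝ) + 2) * ((n : ℝ) + 1) ≠ 0 := by positivity
  have hgoal : A.det * (1 / (Nat.factorial (n + 2) : ℝ) *
      ((Nat.factorial n : ℝ) * ∑ p, ∑ q ∈ Finset.univ.erase p, T p q)) =
      1 / (Nat.factorial (n + 2) : ℝ) * ((Nat.factorial n : ℝ) *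
        (A.det * ∑ p, ∑ q ∈ Finset.univ.erase p, T p q)) := by ring
  rw [hgoal, hsum, hfac]
  field_simp

lemma trace_mul_conjTranspose_self_eq_zero {m : ℕ} (M : Matrix (Fin m) (Fin m) ℝ) :
    (M * Mᴴ).trace = 0 ↔ M = 0 := by
  constructor
  · intro h
    have h1 : ∑ i : Fin m, ∑ j : Fin m, M i j ^ 2 = 0 := by
      have : (M * Mᴴ).trace = ∑ i : Fin m, ∑ j : Fin m, M i j ^ 2 := by
        simp [Matrix.trace, Matrix.diag, Matrix.mul_apply, Matrix.conjTranspose_apply, sq]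
      rwa [this] at h
    ext i j
    have h2 := (Finset.sum_eq_zero_iff_of_nonneg
      (fun i _ => Finset.sum_nonneg (fun j _ => sq_nonneg (M i j)))).1 h1 i (Finset.mem_univ i)
    have h3 := (Finset.sum_eq_zero_iff_of_nonneg
      (fun j _ => sq_nonneg (M i j))).1 h2 j (Finset.mem_univ j)
    simpa using sq_eq_zero_iff.1 h3
  · rintro rfl
    simp

open scoped MatrixOrder in
lemma psd_trace_mul_eq_zero_iff {m : ℕ} {B C : Matrix (Fin m) (Fin m) ℝ}
    (hB : B.PosSemidef) (hC : C.PosSemidef) : (B * C).trace = 0 ↔ B * C = 0 := by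
  set b := CFC.sqrt B with hb
  set c := CFC.sqrt C with hcdef
  have hbH : bᴴ = b := (CFC.sqrt_nonneg B).posSemidef.1
  have hcH : cᴴ = c := (CFC.sqrt_nonneg C).posSemidef.1
  have hBb : b * b = B := CFC.sqrt_mul_sqrt_self B hB.nonneg
  have hCc : c * c = C := CFC.sqrt_mul_sqrt_self C hC.nonneg
  clear_value b c
  have hM : (B * C).trace = ((b * c) * (b * c)ᴴ).trace := by
    rw [Matrix.conjTranspose_mul, hbH, hcH, ← hBb, ← hCc]
    rw [show b * b * (c * c) = b * (b * c * c) by simp only [Matrix.mul_assoc]]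
    rw [Matrix.trace_mul_comm]
    congr 1
    simp only [Matrix.mul_assoc]
  have hBC : B * C = b * ((b * c) * c) := by
    rw [← hBb, ← hCc]
    simp only [Matrix.mul_assoc]
  constructor
  · intro h
    rw [hM, trace_mul_conjTranspose_self_eq_zero] at h
    rw [hBC, h]
    simp
  · intro h
    rw [h, Matrix.trace_zero]

open scoped MatrixOrder in
theorem mixedDisc_eq_iff' {n : ℕ}
    {A₁ A₂ A₃ : Matrix (Fin (n + 2)) (Fin (n + 2)) ℝ}
    (h₁ : A₁.PosSemidef) (h₂ : A₂.PosSemidef) (h₃ : A₃.PosDef) :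
    mixedDisc (fun k => if k = 0 then A₁ else A₃) *
        mixedDisc (fun k => if k = 0 then A₂ else A₃) =
      ((n + 1 : ℝ) / (n + 2)) *
        mixedDisc (fun k => if k = 0 then A₁ else if k = 1 then A₂ else A₃) * A₃.det ↔
    A₁ * A₃⁻¹ * A₂ = 0 := by
  classical
  have hAd : A₃.det ≠ 0 := h₃.det_pos.ne'
  have hAu : IsUnit A₃.det := isUnit_iff_ne_zero.2 hAd
  set P := (A₃.adjugate * A₁).trace with hP
  set Q := (A₃.adjugate * A₂).trace with hQ
  set R := (A₃.adjugate * A₁ * (A₃.adjugate * A₂)).trace with hR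
  have hm : ((n : ℝ) + 2) ≠ 0 := by positivity
  have hRHS : ((n + 1 : ℝ) / (n + 2)) *
      mixedDisc (fun k => if k = 0 then A₁ else if k = 1 then A₂ else A₃) * A₃.det =
      (P * Q - R) / ((n + 2) * (n + 2)) := by
    have h := mixedDisc_two A₁ A₂ A₃ hAu
    have h1 : (n : ℝ) + 1 ≠ 0 := by positivity
    calc ((n + 1 : ℝ) / (n + 2)) *
        mixedDisc (fun k => if k = 0 then A₁ else if k = 1 then A₂ else A₃) * A₃.det
        = ((n + 1 : ℝ) / (n + 2)) *
          (A₃.det * mixedDisc (fun k => if k = 0 then A₁ else if k = 1 then A₂ else A₃)) := by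
          ring
      _ = ((n + 1 : ℝ) / (n + 2)) * ((P * Q - R) / ((n + 2) * (n + 1))) := by rw [h]
      _ = (P * Q - R) / ((n + 2) * (n + 2)) := by field_simp
  rw [mixedDisc_one A₁ A₃, mixedDisc_one A₂ A₃, hRHS, ← hP, ← hQ]
  have hiff : P / (n + 2) * (Q / (n + 2)) = (P * Q - R) / ((n + 2) * (n + 2)) ↔ R = 0 := by
    rw [div_mul_div_comm, div_eq_div_iff (by positivity) (by positivity)]
    constructor
    · intro h
      have h2 : R * ((n + 2 : ℝ) * (n + 2)) = 0 := by nlinarith [h]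
      have := mul_eq_zero.1 h2
      rcases this with h3 | h3
      · exact h3
      · exact absurd h3 (by positivity)
    · intro h
      rw [h]
      ring
  rw [hiff]
  -- now R = 0 ↔ A₁ * A₃⁻¹ * A₂ = 0
  set W := CFC.sqrt A₃⁻¹ with hW
  have hWH : Wᴴ = W := (CFC.sqrt_nonneg A₃⁻¹).posSemidef.1
  have hWW : W * W = A₃⁻¹ := CFC.sqrt_mul_sqrt_self A₃⁻¹ h₃.inv.posSemidef.nonneg
  clear_value W
  have hWd : W.det ≠ 0 := by
    intro h
    have : W.det * W.det = A₃⁻¹.det := by rw [← Matrix.det_mul, hWW]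
    rw [h, mul_zero] at this
    exact h₃.inv.det_pos.ne' this.symm
  have hWu : IsUnit W.det := isUnit_iff_ne_zero.2 hWd
  have hBpsd : (W * A₁ * W).PosSemidef := by
    have := h₁.mul_mul_conjTranspose_same W
    rwa [hWH] at this
  have hCpsd : (W * A₂ * W).PosSemidef := by
    have := h₂.mul_mul_conjTranspose_same W
    rwa [hWH] at this
  have hadj : A₃.adjugate = A₃.det • A₃⁻¹ := by
    rw [Matrix.inv_def, smul_smul, Ring.inverse_eq_inv', mul_inv_cancel₀ hAd, one_smul]
  have hRval : R = A₃.det ^ 2 * ((W * A₁ * W) * (W * A₂ * W)).trace := by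
    rw [hR, hadj]
    simp only [Matrix.smul_mul, Matrix.mul_smul, smul_smul, Matrix.trace_smul]
    have htr : (A₃⁻¹ * A₁ * (A₃⁻¹ * A₂)).trace = ((W * A₁ * W) * (W * A₂ * W)).trace := by
      rw [← hWW]
      rw [show W * W * A₁ * (W * W * A₂) = W * (W * A₁ * (W * W * A₂)) by
        simp only [Matrix.mul_assoc]]
      rw [Matrix.trace_mul_comm]
      congr 1
      simp only [Matrix.mul_assoc]
    rw [htr, smul_eq_mul, sq]
  have hcan : ∀ Z : Matrix (Fin (n + 2)) (Fin (n + 2)) ℝ, W * Z * W = 0 → Z = 0 := by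
    intro Z h
    have hz : Z = W⁻¹ * (W * Z * W) * W⁻¹ := by
      rw [show W⁻¹ * (W * Z * W) * W⁻¹ = (W⁻¹ * W) * Z * (W * W⁻¹) by
        simp only [Matrix.mul_assoc]]
      rw [Matrix.nonsing_inv_mul W hWu, Matrix.mul_nonsing_inv W hWu, Matrix.one_mul,
        Matrix.mul_one]
    rw [hz, h]
    simp
  have hprod : (W * A₁ * W) * (W * A₂ * W) = W * (A₁ * A₃⁻¹ * A₂) * W := by
    rw [← hWW]
    simp only [Matrix.mul_assoc]
  rw [hRval]
  rw [mul_eq_zero]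
  have hdet2 : (A₃.det ^ 2 : ℝ) ≠ 0 := pow_ne_zero _ hAd
  constructor
  · intro h
    rcases h with h | h
    · exact absurd h hdet2
    · rw [psd_trace_mul_eq_zero_iff hBpsd hCpsd, hprod] at h
      exact hcan _ h
  · intro h
    right
    rw [psd_trace_mul_eq_zero_iff hBpsd hCpsd, hprod, h]
    simp

/-- Equality `D(A₁,A₃[n−1]) · D(A₂,A₃[n−1]) = ((n−1)/n) · D(A₁,A₂,A₃[n−2]) · det A₃`
holds iff `A₁A₃⁻¹A₂ = 0` (the ambient dimension is `n + 2 ≥ 2`). -/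
theorem mixedDisc_eq_iff {n : ℕ}
    {A₁ A₂ A₃ : Matrix (Fin (n + 2)) (Fin (n + 2)) ℝ}
    (h₁ : A₁.PosSemidef) (h₂ : A₂.PosSemidef) (h₃ : A₃.PosDef) :
    mixedDisc (fun k => if k = 0 then A₁ else A₃) *
        mixedDisc (fun k => if k = 0 then A₂ else A₃) =
      ((n + 1 : ℝ) / (n + 2)) *
        mixedDisc (fun k => if k = 0 then A₁ else if k = 1 then A₂ else A₃) * A₃.det ↔
    A₁ * A₃⁻¹ * A₂ = 0 := mixedDisc_eq_iff' h₁ h₂ h₃
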